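/- arXiv:2012.15433 — 3 statements merged into one kernel-verified Lean document; each statement's English description precedes it below -/
import Mathlib

section
/- Let A, B be real 3×2 matrices, each decomposed as A = A_t + A_o and B = B_t + B_o, where the rows of A_t, B_t lie in a fixed 2-dimensional subspace P of R^3 (columns projected onto P) and A_o, B_o are the orthogonal complements. Suppose ‖A_t - B_t‖ ≤ C h^{k+1}, ‖A_o - B_o‖ ≤ C h^k, ‖A_t + B_t‖ ≤ C, and ‖A_o‖ ≤ C h, ‖B_o‖ ≤ C h, for constants C > 0 and 0 < h < 1. Then ‖A^T A - B^T B‖ ≤ C' h^{k+1} for some constant C' depending only on C. -/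
open Matrix

attribute [local instance] Matrix.frobeniusSeminormedAddCommGroup
attribute [local instance] Matrix.frobeniusNormSMulClass

private lemma cross_zero (P : Submodule ℝ (EuclideanSpace ℝ (Fin 3)))
    (X Y : Matrix (Fin 3) (Fin 2) ℝ)
    (hX : ∀ j, (WithLp.toLp 2 (fun i => X i j) : EuclideanSpace ℝ (Fin 3)) ∈ P)
    (hY : ∀ j, (WithLp.toLp 2 (fun i => Y i j) : EuclideanSpace ℝ (Fin 3)) ∈ Pᗮ) :
    Xᵀ * Y = 0 := by
  ext j l
  have h0 : (@inner ℝ (EuclideanSpace ℝ (Fin 3)) _ (WithLp.toLp 2 (fun i => X i j)) (WithLp.toLp 2 (fun i => Y i l))) = 0 :=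
    (Submodule.mem_orthogonal P _).mp (hY l) _ (hX j)
  simpa [Matrix.mul_apply, Matrix.transpose_apply, PiLp.inner_apply,
    RCLike.inner_apply, mul_comm] using h0

/-- If the Jacobians `A`, `B` split into in-plane parts (columns in a 2-dimensional subspace
`P` of `ℝ³`) and orthogonal parts, with in-plane difference `O(h^{k+1})`, orthogonal
difference `O(h^k)`, bounded in-plane sum, and `O(h)` orthogonal parts, then the metric
tensors satisfy `‖AᵀA - BᵀB‖ ≤ C' h^{k+1}` with `C'` depending only on `C`. -/
theorem stmt3 (C : ℝ) (hC : 0 < C) :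
    ∃ C' : ℝ, 0 < C' ∧
      ∀ (h : ℝ) (k : ℕ) (A At Ao B Bt Bo : Matrix (Fin 3) (Fin 2) ℝ)
        (P : Submodule ℝ (EuclideanSpace ℝ (Fin 3))),
        0 < h → h < 1 → Module.finrank ℝ P = 2 →
        A = At + Ao → B = Bt + Bo →
        (∀ j, (WithLp.toLp 2 (fun i => At i j) : EuclideanSpace ℝ (Fin 3)) ∈ P) →
        (∀ j, (WithLp.toLp 2 (fun i => Bt i j) : EuclideanSpace ℝ (Fin 3)) ∈ P) →
        (∀ j, (WithLp.toLp 2 (fun i => Ao i j) : EuclideanSpace ℝ (Fin 3)) ∈ Pᗮ) →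
        (∀ j, (WithLp.toLp 2 (fun i => Bo i j) : EuclideanSpace ℝ (Fin 3)) ∈ Pᗮ) →
        ‖At - Bt‖ ≤ C * h ^ (k + 1) →
        ‖Ao - Bo‖ ≤ C * h ^ k →
        ‖At + Bt‖ ≤ C →
        ‖Ao‖ ≤ C * h → ‖Bo‖ ≤ C * h →
        ‖Aᵀ * A - Bᵀ * B‖ ≤ C' * h ^ (k + 1) := by
  refine ⟨3 * C ^ 2, by positivity, ?_⟩
  intro h k A At Ao B Bt Bo P hh h1 _ hA hB hAt hBt hAo hBo hd1 hd2 hs hao hbo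
  -- key identity bound
  have key : ∀ X Y : Matrix (Fin 3) (Fin 2) ℝ,
      ‖Xᵀ * X - Yᵀ * Y‖ ≤ ‖X - Y‖ * ‖X + Y‖ := by
    intro X Y
    have hid : Xᵀ * X - Yᵀ * Y =
        (2⁻¹ : ℝ) • ((X - Y)ᵀ * (X + Y) + (X + Y)ᵀ * (X - Y)) := by
      have : (X - Y)ᵀ * (X + Y) + (X + Y)ᵀ * (X - Y)
          = (2 : ℝ) • (Xᵀ * X - Yᵀ * Y) := by
        simp only [Matrix.transpose_sub, Matrix.transpose_add, Matrix.add_mul,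
          Matrix.sub_mul, Matrix.mul_add, Matrix.mul_sub, two_smul]
        abel
      rw [this, smul_smul]
      norm_num
    calc ‖Xᵀ * X - Yᵀ * Y‖
        = (2⁻¹ : ℝ) * ‖(X - Y)ᵀ * (X + Y) + (X + Y)ᵀ * (X - Y)‖ := by
          rw [hid, norm_smul]; norm_num
      _ ≤ (2⁻¹ : ℝ) * (‖(X - Y)ᵀ * (X + Y)‖ + ‖(X + Y)ᵀ * (X - Y)‖) := by
          gcongr; exact norm_add_le _ _
      _ ≤ (2⁻¹ : ℝ) * (‖X - Y‖ * ‖X + Y‖ + ‖X + Y‖ * ‖X - Y‖) := by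
          gcongr
          · calc ‖(X - Y)ᵀ * (X + Y)‖ ≤ ‖(X - Y)ᵀ‖ * ‖X + Y‖ :=
                Matrix.frobenius_norm_mul _ _
              _ = ‖X - Y‖ * ‖X + Y‖ := by rw [Matrix.frobenius_norm_transpose]
          · calc ‖(X + Y)ᵀ * (X - Y)‖ ≤ ‖(X + Y)ᵀ‖ * ‖X - Y‖ :=
                Matrix.frobenius_norm_mul _ _
              _ = ‖X + Y‖ * ‖X - Y‖ := by rw [Matrix.frobenius_norm_transpose]
      _ = ‖X - Y‖ * ‖X + Y‖ := by ring
  -- cross terms vanish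
  have cAt : Atᵀ * Ao = 0 := cross_zero P At Ao hAt hAo
  have cBt : Btᵀ * Bo = 0 := cross_zero P Bt Bo hBt hBo
  have cAo : Aoᵀ * At = 0 := by
    have := congrArg Matrix.transpose cAt
    simpa using this
  have cBo : Boᵀ * Bt = 0 := by
    have := congrArg Matrix.transpose cBt
    simpa using this
  have hATA : Aᵀ * A = Atᵀ * At + Aoᵀ * Ao := by
    subst hA
    simp [Matrix.transpose_add, Matrix.add_mul, Matrix.mul_add, cAt, cAo]
  have hBTB : Bᵀ * B = Btᵀ * Bt + Boᵀ * Bo := by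
    subst hB
    simp [Matrix.transpose_add, Matrix.add_mul, Matrix.mul_add, cBt, cBo]
  have split : Aᵀ * A - Bᵀ * B = (Atᵀ * At - Btᵀ * Bt) + (Aoᵀ * Ao - Boᵀ * Bo) := by
    rw [hATA, hBTB]; abel
  have hks : (0:ℝ) ≤ h ^ k := by positivity
  have hhk1 : (0:ℝ) ≤ h ^ (k+1) := by positivity
  have b1 : ‖Atᵀ * At - Btᵀ * Bt‖ ≤ C * h ^ (k + 1) * C := by
    calc ‖Atᵀ * At - Btᵀ * Bt‖ ≤ ‖At - Bt‖ * ‖At + Bt‖ := key At Bt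
      _ ≤ C * h ^ (k + 1) * C := by
          apply mul_le_mul hd1 hs (norm_nonneg _) (by positivity)
  have b2 : ‖Aoᵀ * Ao - Boᵀ * Bo‖ ≤ C * h ^ k * (2 * C * h) := by
    calc ‖Aoᵀ * Ao - Boᵀ * Bo‖ ≤ ‖Ao - Bo‖ * ‖Ao + Bo‖ := key Ao Bo
      _ ≤ C * h ^ k * (2 * C * h) := by
          apply mul_le_mul hd2 ?_ (norm_nonneg _) (by positivity)
          calc ‖Ao + Bo‖ ≤ ‖Ao‖ + ‖Bo‖ := norm_add_le _ _
            _ ≤ C * h + C * h := add_le_add hao hbo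
            _ = 2 * C * h := by ring
  calc ‖Aᵀ * A - Bᵀ * B‖ ≤ ‖Atᵀ * At - Btᵀ * Bt‖ + ‖Aoᵀ * Ao - Boᵀ * Bo‖ := by
        rw [split]; exact norm_add_le _ _
    _ ≤ C * h ^ (k + 1) * C + C * h ^ k * (2 * C * h) := add_le_add b1 b2
    _ = 3 * C ^ 2 * h ^ (k + 1) := by rw [pow_succ]; ring
end

section
/- Let p : D → R be an L-Lipschitz function on a convex domain D ⊂ R^2 and p_h : D → R with Lipschitz gradient constant L' (i.e., ∇p_h is L'-Lipschitz), and suppose L·‖∇p‖_∞ + L'·‖p_h‖_∞ ≤ 1 − c for some c > 0. If x, y ∈ D satisfy x − y = p(y)∇p(y) − p_h(x)∇p_h(x), then |x − y| ≤ (1/c)·(‖∇p‖_∞ · ‖p − p_h‖_∞ + ‖p_h‖_∞ · ‖∇p − ∇p_h‖_∞). -/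
/-- The key contraction estimate in the proof of nodal accuracy (Proposition 1): if
`x − y = p(y)∇p(y) − p_h(x)∇p_h(x)` with `p` being `L`-Lipschitz, `∇p_h` being
`L'`-Lipschitz, and `L‖∇p‖_∞ + L'‖p_h‖_∞ ≤ 1 − c`, then
`‖x − y‖ ≤ (1/c)(‖∇p‖_∞‖p − p_h‖_∞ + ‖p_h‖_∞‖∇p − ∇p_h‖_∞)`. -/
theorem stmt9 (D : Set (EuclideanSpace ℝ (Fin 2))) (hD : Convex ℝ D)
    (p ph : EuclideanSpace ℝ (Fin 2) → ℝ) (L L' c : ℝ) (hc : 0 < c)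
    (Gp Ph Pdiff Gdiff : ℝ)
    (hLip : ∀ a ∈ D, ∀ b ∈ D, |p a - p b| ≤ L * ‖a - b‖)
    (hLip' : ∀ a ∈ D, ∀ b ∈ D, ‖gradient ph a - gradient ph b‖ ≤ L' * ‖a - b‖)
    (hGp : ∀ z ∈ D, ‖gradient p z‖ ≤ Gp)
    (hPh : ∀ z ∈ D, |ph z| ≤ Ph)
    (hPdiff : ∀ z ∈ D, |p z - ph z| ≤ Pdiff)
    (hGdiff : ∀ z ∈ D, ‖gradient p z - gradient ph z‖ ≤ Gdiff)
    (hsmall : L * Gp + L' * Ph ≤ 1 - c)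
    (x y : EuclideanSpace ℝ (Fin 2)) (hx : x ∈ D) (hy : y ∈ D)
    (heq : x - y = p y • gradient p y - ph x • gradient ph x) :
    ‖x - y‖ ≤ (1 / c) * (Gp * Pdiff + Ph * Gdiff) := by
  set d := ‖x - y‖ with hd
  have hd0 : 0 ≤ d := norm_nonneg _
  have hGp0 : (0:ℝ) ≤ Gp := le_trans (norm_nonneg _) (hGp y hy)
  have hPh0 : (0:ℝ) ≤ Ph := le_trans (abs_nonneg _) (hPh x hx)
  -- bound |p y - ph x|
  have h1 : |p y - ph x| ≤ L * d + Pdiff := by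
    have hyx : ‖y - x‖ = d := by rw [hd, norm_sub_rev]
    calc |p y - ph x| = |(p y - p x) + (p x - ph x)| := by ring_nf
      _ ≤ |p y - p x| + |p x - ph x| := abs_add_le _ _
      _ ≤ L * d + Pdiff := by
          have := hLip y hy x hx
          rw [hyx] at this
          exact add_le_add this (hPdiff x hx)
  -- bound ‖gradient p y - gradient ph x‖
  have h2 : ‖gradient p y - gradient ph x‖ ≤ Gdiff + L' * d := by
    have hyx : ‖y - x‖ = d := by rw [hd, norm_sub_rev]
    calc ‖gradient p y - gradient ph x‖
        = ‖(gradient p y - gradient ph y) + (gradient ph y - gradient ph x)‖ := by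
          congr 1; abel
      _ ≤ ‖gradient p y - gradient ph y‖ + ‖gradient ph y - gradient ph x‖ :=
          norm_add_le _ _
      _ ≤ Gdiff + L' * d := by
          have := hLip' y hy x hx
          rw [hyx] at this
          exact add_le_add (hGdiff y hy) this
  -- the main decomposition
  have hdec : x - y = (p y - ph x) • gradient p y
      + ph x • (gradient p y - gradient ph x) := by
    rw [heq, sub_smul, smul_sub]
    abel
  have hkey : d ≤ (L * d + Pdiff) * Gp + Ph * (Gdiff + L' * d) := by
    calc d = ‖(p y - ph x) • gradient p y
        + ph x • (gradient p y - gradient ph x)‖ := by rw [hd, hdec]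
      _ ≤ ‖(p y - ph x) • gradient p y‖
          + ‖ph x • (gradient p y - gradient ph x)‖ := norm_add_le _ _
      _ = |p y - ph x| * ‖gradient p y‖
          + |ph x| * ‖gradient p y - gradient ph x‖ := by
          rw [norm_smul, norm_smul, Real.norm_eq_abs, Real.norm_eq_abs]
      _ ≤ (L * d + Pdiff) * Gp + Ph * (Gdiff + L' * d) := by
          have := hGp y hy
          have := hPh x hx
          gcongr <;> first
            | exact abs_nonneg _ | exact le_trans (norm_nonneg _) h2
            | exact h1 | exact h2 | exact le_trans (abs_nonneg _) h1 | assumption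
  have hcd : c * d ≤ Gp * Pdiff + Ph * Gdiff := by
    nlinarith [mul_le_mul_of_nonneg_right hsmall hd0]
  rw [one_div, inv_mul_eq_div, le_div_iff₀ hc]
  linarith
end

section
/- With the hypotheses of the previous contraction estimate, assume additionally ‖p − p_h‖_∞ ≤ C h^{k+1}, ‖∇p − ∇p_h‖_∞ ≤ C h^k, ‖∇p‖_∞ ≤ C h, ‖p_h‖_∞ ≤ C h^2, and that p is L-Lipschitz with L ≤ C h. Then |x − y| ≤ C' h^{k+2}, and moreover if x_3 = p_h(x) and y_3 = p(y), then |x_3 − y_3| ≤ ‖p_h − p‖_∞ + L|x − y| ≤ C'' h^{k+1}. -/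
/-- Proposition 1 (nodal accuracy): under the contraction hypotheses with
`‖p − p_h‖_∞ ≤ C h^{k+1}`, `‖∇p − ∇p_h‖_∞ ≤ C h^k`, `‖∇p‖_∞ ≤ C h`, `‖p_h‖_∞ ≤ C h²`,
and `L ≤ C h`, the in-plane nodal error satisfies `‖x − y‖ ≤ (2C²/c) h^{k+2}` and the
vertical error satisfies `|p_h(x) − p(y)| ≤ C h^{k+1} + L‖x − y‖ ≤ (C + 2C³/c) h^{k+1}`. -/
theorem stmt10 (C c h : ℝ) (k : ℕ) (hC : 0 < C) (hc : 0 < c) (h0 : 0 < h) (h1 : h < 1)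
    (D : Set (EuclideanSpace ℝ (Fin 2))) (hD : Convex ℝ D)
    (p ph : EuclideanSpace ℝ (Fin 2) → ℝ) (L L' : ℝ)
    (hLip : ∀ a ∈ D, ∀ b ∈ D, |p a - p b| ≤ L * ‖a - b‖)
    (hLip' : ∀ a ∈ D, ∀ b ∈ D, ‖gradient ph a - gradient ph b‖ ≤ L' * ‖a - b‖)
    (hL : L ≤ C * h)
    (hGp : ∀ z ∈ D, ‖gradient p z‖ ≤ C * h)
    (hPh : ∀ z ∈ D, |ph z| ≤ C * h ^ 2)
    (hPdiff : ∀ z ∈ D, |p z - ph z| ≤ C * h ^ (k + 1))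
    (hGdiff : ∀ z ∈ D, ‖gradient p z - gradient ph z‖ ≤ C * h ^ k)
    (hsmall : L * (C * h) + L' * (C * h ^ 2) ≤ 1 - c)
    (x y : EuclideanSpace ℝ (Fin 2)) (hx : x ∈ D) (hy : y ∈ D)
    (heq : x - y = p y • gradient p y - ph x • gradient ph x) :
    ‖x - y‖ ≤ (2 * C ^ 2 / c) * h ^ (k + 2)
      ∧ |ph x - p y| ≤ C * h ^ (k + 1) + L * ‖x - y‖
      ∧ C * h ^ (k + 1) + L * ‖x - y‖ ≤ (C + 2 * C ^ 3 / c) * h ^ (k + 1) := by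
  have hn : (0:ℝ) ≤ ‖x - y‖ := norm_nonneg _
  have hrev : ‖y - x‖ = ‖x - y‖ := norm_sub_rev _ _
  have key : ‖x - y‖ ≤ (L * (C * h) + L' * (C * h ^ 2)) * ‖x - y‖
      + 2 * C ^ 2 * h ^ (k + 2) := by
    have hid : p y • gradient p y - ph x • gradient ph x
        = ((p y - p x) • gradient p y + (p x - ph x) • gradient p y)
          + (ph x • (gradient p y - gradient ph y)
          + ph x • (gradient ph y - gradient ph x)) := by module
    have t1 : ‖(p y - p x) • gradient p y‖ ≤ (L * ‖x - y‖) * (C * h) := by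
      rw [norm_smul, Real.norm_eq_abs]
      have := hLip y hy x hx
      rw [hrev] at this
      exact mul_le_mul this (hGp y hy) (norm_nonneg _)
        (by nlinarith [abs_nonneg (p y - p x), (abs_nonneg (p y - p x)).trans this])
    have t2 : ‖(p x - ph x) • gradient p y‖ ≤ C * h ^ (k + 1) * (C * h) := by
      rw [norm_smul, Real.norm_eq_abs]
      exact mul_le_mul (hPdiff x hx) (hGp y hy) (norm_nonneg _) (by positivity)
    have t3 : ‖ph x • (gradient p y - gradient ph y)‖ ≤ C * h ^ 2 * (C * h ^ k) := by
      rw [norm_smul, Real.norm_eq_abs]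
      exact mul_le_mul (hPh x hx) (hGdiff y hy) (norm_nonneg _) (by positivity)
    have t4 : ‖ph x • (gradient ph y - gradient ph x)‖ ≤ C * h ^ 2 * (L' * ‖x - y‖) := by
      rw [norm_smul, Real.norm_eq_abs]
      have := hLip' y hy x hx
      rw [hrev] at this
      exact mul_le_mul (hPh x hx) this (norm_nonneg _) (by positivity)
    calc ‖x - y‖ = ‖((p y - p x) • gradient p y + (p x - ph x) • gradient p y)
          + (ph x • (gradient p y - gradient ph y)
          + ph x • (gradient ph y - gradient ph x))‖ := by rw [heq, hid]
      _ ≤ (‖(p y - p x) • gradient p y‖ + ‖(p x - ph x) • gradient p y‖)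
          + (‖ph x • (gradient p y - gradient ph y)‖
          + ‖ph x • (gradient ph y - gradient ph x)‖) :=
        (norm_add_le _ _).trans (by gcongr <;> exact norm_add_le _ _)
      _ ≤ ((L * ‖x - y‖) * (C * h) + C * h ^ (k + 1) * (C * h))
          + (C * h ^ 2 * (C * h ^ k) + C * h ^ 2 * (L' * ‖x - y‖)) := by
        gcongr
      _ = (L * (C * h) + L' * (C * h ^ 2)) * ‖x - y‖ + 2 * C ^ 2 * h ^ (k + 2) := by
        ring
  have hcontr : c * ‖x - y‖ ≤ 2 * C ^ 2 * h ^ (k + 2) := by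
    have h2 : (L * (C * h) + L' * (C * h ^ 2)) * ‖x - y‖ ≤ (1 - c) * ‖x - y‖ :=
      mul_le_mul_of_nonneg_right hsmall hn
    nlinarith
  have hfirst : ‖x - y‖ ≤ (2 * C ^ 2 / c) * h ^ (k + 2) := by
    rw [div_mul_eq_mul_div, le_div_iff₀ hc]
    nlinarith
  refine ⟨hfirst, ?_, ?_⟩
  · calc |ph x - p y| = |(ph x - p x) + (p x - p y)| := by ring_nf
      _ ≤ |ph x - p x| + |p x - p y| := abs_add_le _ _
      _ ≤ C * h ^ (k + 1) + L * ‖x - y‖ := by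
        gcongr
        · rw [abs_sub_comm]; exact hPdiff x hx
        · exact hLip x hx y hy
  · have hLxy : L * ‖x - y‖ ≤ (C * h) * ((2 * C ^ 2 / c) * h ^ (k + 2)) := by
      have := mul_le_mul_of_nonneg_right hL hn
      have h2 : (C * h) * ‖x - y‖ ≤ (C * h) * ((2 * C ^ 2 / c) * h ^ (k + 2)) := by
        gcongr
      linarith
    have hpow : h ^ (k + 3) ≤ h ^ (k + 1) :=
      pow_le_pow_of_le_one h0.le h1.le (by omega)
    have hcc : (0:ℝ) < 2 * C ^ 3 / c := by positivity
    have hkey : (C * h) * ((2 * C ^ 2 / c) * h ^ (k + 2)) = (2 * C ^ 3 / c) * h ^ (k + 3) := by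
      rw [pow_succ, pow_succ]; field_simp; ring
    have : (2 * C ^ 3 / c) * h ^ (k + 3) ≤ (2 * C ^ 3 / c) * h ^ (k + 1) := by gcongr
    nlinarith
end
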